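/- Let r,s ≥ 1. If G is a bipartite graph with bipartition (X,Y) such that |X|,|Y| ≥ rs+r−1, and G contains no induced subgraph isomorphic to the disjoint union of a star K_{1,r} and s isolated vertices, then either every vertex of G has degree less than r, or (fewer than s vertices of X have more than s−1 non-neighbours in Y, and fewer than s vertices of Y have more than s−1 non-neighbours in X). -/

import Mathlib

open SimpleGraph

/-- `S` is an independent set of `G`. -/
def IsIS {V : Type*} (G : SimpleGraph V) (S : Set V) : Prop :=
  S.Pairwise fun u v => ¬ G.Adj u v

/-- `G` contains no induced subgraph isomorphic to `H`. -/
def HFree {W V : Type*} (H : SimpleGraph W) (G : SimpleGraph V) : Prop :=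
  IsEmpty (H ↪g G)

/-- `G` is bipartite: the vertex set splits into two independent sets. -/
def IsBip {V : Type*} (G : SimpleGraph V) : Prop :=
  ∃ X : Set V, IsIS G X ∧ IsIS G Xᶜ

/-- `S` is a vertex cover of `G`. -/
def IsVC {V : Type*} (G : SimpleGraph V) (S : Finset V) : Prop :=
  ∀ ⦃u v⦄, G.Adj u v → u ∈ S ∨ v ∈ S

/-- minimum size of a vertex cover. -/
noncomputable def vc {V : Type*} (G : SimpleGraph V) : ℕ :=
  sInf {n | ∃ S : Finset V, IsVC G S ∧ S.card = n}

/-- minimum size of an independent vertex cover. -/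
noncomputable def ivc {V : Type*} (G : SimpleGraph V) : ℕ :=
  sInf {n | ∃ S : Finset V, IsVC G S ∧ IsIS G ↑S ∧ S.card = n}

/-- The disjoint union `K_{1,r} + s·P_1`: a star with `r` leaves plus `s` isolated vertices. -/
def starPlus (r s : ℕ) : SimpleGraph (Unit ⊕ Fin r ⊕ Fin s) :=
  SimpleGraph.fromRel fun u v => ∃ i : Fin r, u = Sum.inl () ∧ v = Sum.inr (Sum.inl i)

open Finset in
set_option maxRecDepth 8000 in
noncomputable def star_emb {V : Type*} (G : SimpleGraph V) (r s : ℕ) (c : V)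
    (f : Fin r → V) (g : Fin s → V)
    (hf : Function.Injective f) (hg : Function.Injective g)
    (hcf : ∀ i, G.Adj c (f i)) (hcg : ∀ j, ¬ G.Adj c (g j)) (hcg' : ∀ j, c ≠ g j)
    (hff : ∀ i i', ¬ G.Adj (f i) (f i'))
    (hgg : ∀ j j', ¬ G.Adj (g j) (g j'))
    (hfg : ∀ i j, ¬ G.Adj (f i) (g j)) :
    starPlus r s ↪g G := by
  have hfg' : ∀ i j, f i ≠ g j := fun i j h => hcg j (h ▸ hcf i)
  have hcf' : ∀ i, c ≠ f i := fun i => (hcf i).ne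
  have hgf : ∀ j i, ¬ G.Adj (g j) (f i) := fun j i h => hfg i j h.symm
  have hgc : ∀ j, ¬ G.Adj (g j) c := fun j h => hcg j h.symm
  have hfc : ∀ i, G.Adj (f i) c := fun i => (hcf i).symm
  refine ⟨⟨Sum.elim (fun _ => c) (Sum.elim f g), ?_⟩, ?_⟩
  · rintro (⟨⟩|i|j) (⟨⟩|i'|j') h <;>
      simp only [Sum.elim_inl, Sum.elim_inr] at h <;>
      first
        | rfl
        | (exact absurd h (hcf' _))
        | (exact absurd h (hcg' _))
        | (exact absurd h.symm (hcf' _))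
        | (exact absurd h.symm (hcg' _))
        | (exact absurd h (hfg' _ _))
        | (exact absurd h.symm (hfg' _ _))
        | (exact congrArg (Sum.inr ∘ Sum.inl) (hf h))
        | (exact congrArg (Sum.inr ∘ Sum.inr) (hg h))
  · rintro (⟨⟩|i|j) (⟨⟩|i'|j') <;>
      dsimp only [DFunLike.coe] <;>
      simp [starPlus, SimpleGraph.fromRel_adj, hcf, hcg, hff, hgg, hfg, hgf, hgc, hfc,
        (hcf _).ne, Sum.inl.injEq, Sum.inr.injEq]

lemma no_star {V : Type*} [DecidableEq V] (G : SimpleGraph V) {r s : ℕ}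
    (hfree : HFree (starPlus r s) G) (c : V) (L T : Finset V)
    (hLc : L.card = r) (hTc : T.card = s)
    (hcL : ∀ x ∈ L, G.Adj c x)
    (hcT : ∀ x ∈ T, ¬ G.Adj c x) (hcT' : ∀ x ∈ T, c ≠ x)
    (hLL : ∀ x ∈ L, ∀ y ∈ L, ¬ G.Adj x y)
    (hTT : ∀ x ∈ T, ∀ y ∈ T, ¬ G.Adj x y)
    (hLT : ∀ x ∈ L, ∀ y ∈ T, ¬ G.Adj x y) : False := by
  let eL := L.equivFinOfCardEq hLc
  let eT := T.equivFinOfCardEq hTc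
  set f : Fin r → V := fun i => ((eL.symm i : L) : V) with hfdef
  set g : Fin s → V := fun j => ((eT.symm j : T) : V) with hgdef
  have hfm : ∀ i, f i ∈ L := fun i => (eL.symm i).2
  have hgm : ∀ j, g j ∈ T := fun j => (eT.symm j).2
  have hf : Function.Injective f := fun i i' h => by
    apply eL.symm.injective; exact Subtype.ext h
  have hg : Function.Injective g := fun j j' h => by
    apply eT.symm.injective; exact Subtype.ext h
  exact hfree.false <| star_emb G r s c f g hf hg
    (fun i => hcL _ (hfm i)) (fun j => hcT _ (hgm j)) (fun j => hcT' _ (hgm j))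
    (fun i i' => hLL _ (hfm i) _ (hfm i'))
    (fun j j' => hTT _ (hgm j) _ (hgm j'))
    (fun i j => hLT _ (hfm i) _ (hgm j))

lemma indep_pair {V : Type*} {G : SimpleGraph V} {P : Finset V} (hP : IsIS G ↑P) :
    ∀ x ∈ P, ∀ y ∈ P, ¬ G.Adj x y := by
  intro x hx y hy hadj
  rcases eq_or_ne x y with rfl | hne
  · exact G.irrefl hadj
  · exact hP (Finset.mem_coe.2 hx) (Finset.mem_coe.2 hy) hne hadj

lemma nbrs_sub {V : Type*} [Fintype V] [DecidableEq V] (G : SimpleGraph V)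
    [DecidableRel G.Adj] (P Q : Finset V) (hunion : P ∪ Q = Finset.univ)
    (hQ : IsIS G ↑Q) {u : V} (hu : u ∈ Q) : G.neighborFinset u ⊆ P := by
  intro w hw
  rw [mem_neighborFinset] at hw
  by_contra hwP
  have hwQ : w ∈ Q := by
    have : w ∈ P ∪ Q := hunion ▸ Finset.mem_univ w
    simpa [hwP] using Finset.mem_union.1 this
  exact indep_pair hQ u hu w hwQ hw

lemma filter_adj_eq {V : Type*} [Fintype V] [DecidableEq V] (G : SimpleGraph V)
    [DecidableRel G.Adj] {P : Finset V} {u : V} (h : G.neighborFinset u ⊆ P) :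
    P.filter (fun x => G.Adj u x) = G.neighborFinset u := by
  ext w
  simp only [Finset.mem_filter, mem_neighborFinset]
  exact ⟨fun hx => hx.2, fun hx => ⟨h ((mem_neighborFinset G u w).2 hx), hx⟩⟩

/-- degree + nonneighbours on the opposite side = size of opposite side -/
lemma deg_add_nn {V : Type*} [Fintype V] [DecidableEq V] (G : SimpleGraph V)
    [DecidableRel G.Adj] (P Q : Finset V) (hunion : P ∪ Q = Finset.univ)
    (hQ : IsIS G ↑Q) {u : V} (hu : u ∈ Q) :
    G.degree u + (P.filter fun x => ¬ G.Adj u x).card = P.card := by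
  have h := filter_adj_eq G (nbrs_sub G P Q hunion hQ hu)
  have := Finset.card_filter_add_card_filter_not (s := P)
    (p := fun x => G.Adj u x)
  rw [h] at this
  rw [SimpleGraph.degree]
  exact this

/-- any vertex of degree ≥ r has < s non-neighbours on the opposite side -/
lemma small_nonadj {V : Type*} [Fintype V] [DecidableEq V] (G : SimpleGraph V)
    [DecidableRel G.Adj] {r s : ℕ} (hs : 1 ≤ s)
    (P Q : Finset V) (hdisj : Disjoint P Q) (hunion : P ∪ Q = Finset.univ)
    (hP : IsIS G ↑P) (hQ : IsIS G ↑Q)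
    (hfree : HFree (starPlus r s) G)
    {u : V} (hu : u ∈ Q) (hdeg : r ≤ G.degree u) :
    (P.filter fun x => ¬ G.Adj u x).card < s := by
  by_contra hcon
  push_neg at hcon
  obtain ⟨T, hTsub, hTcard⟩ := Finset.exists_subset_card_eq hcon
  obtain ⟨L, hLsub, hLcard⟩ := Finset.exists_subset_card_eq hdeg
  have hTP : ∀ x ∈ T, x ∈ P ∧ ¬ G.Adj u x := fun x hx => by
    have := hTsub hx; simpa using (Finset.mem_filter.1 this)
  have hLP : ∀ x ∈ L, x ∈ P := fun x hx =>
    nbrs_sub G P Q hunion hQ hu (hLsub hx)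
  refine no_star G hfree u L T hLcard hTcard
    (fun x hx => by have h := hLsub hx; rw [mem_neighborFinset] at h; exact h)
    (fun x hx => (hTP x hx).2)
    (fun x hx => fun he => by
      exact Finset.disjoint_left.1 hdisj (hTP x hx).1 (he ▸ hu))
    (fun x hx y hy => indep_pair hP x (hLP x hx) y (hLP y hy))
    (fun x hx y hy => indep_pair hP x (hTP x hx).1 y (hTP y hy).1)
    (fun x hx y hy => indep_pair hP x (hLP x hx) y (hTP y hy).1)

theorem key {V : Type*} [Fintype V] [DecidableEq V] (G : SimpleGraph V)
    [DecidableRel G.Adj] (r s : ℕ) (hr : 1 ≤ r) (hs : 1 ≤ s)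
    (X Y : Finset V) (hdisj : Disjoint X Y) (hunion : X ∪ Y = Finset.univ)
    (hX : IsIS G ↑X) (hY : IsIS G ↑Y)
    (hXcard : r * s + r - 1 ≤ X.card) (hYcard : r * s + r - 1 ≤ Y.card)
    (hfree : HFree (starPlus r s) G)
    (v : V) (hv : v ∈ Y) (hdeg : r ≤ G.degree v) :
    (((X.filter fun x => s - 1 < (Y.filter fun y => ¬ G.Adj x y).card).card < s) ∧
     ((Y.filter fun y => s - 1 < (X.filter fun x => ¬ G.Adj y x).card).card < s)) := by
  have hsr : s * (r - 1) + s * 1 = s * r := by rw [← Nat.mul_add]; congr 1; omega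
  have hrs : r * s = s * r := Nat.mul_comm r s
  -- low degree criterion: y ∈ Y with many non-neighbours has degree < r (and conversely)
  have hlowY : ∀ y ∈ Y, s - 1 < (X.filter fun x => ¬ G.Adj y x).card → G.degree y < r := by
    intro y hy hnn
    by_contra hge
    push_neg at hge
    have := small_nonadj G hs X Y hdisj hunion hX hY hfree hy hge
    omega
  have hlowX : ∀ x ∈ X, s - 1 < (Y.filter fun y => ¬ G.Adj x y).card → G.degree x < r := by
    intro x hx hnn
    by_contra hge
    push_neg at hge
    have := small_nonadj G hs Y X hdisj.symm (by rw [Finset.union_comm]; exact hunion)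
      hY hX hfree hx hge
    omega
  -- Step 2 : the Y-side bound
  have hB : (Y.filter fun y => s - 1 < (X.filter fun x => ¬ G.Adj y x).card).card < s := by
    by_contra hcon
    push_neg at hcon
    obtain ⟨T, hTsub, hTcard⟩ := Finset.exists_subset_card_eq hcon
    have hTY : ∀ t ∈ T, t ∈ Y ∧ s - 1 < (X.filter fun x => ¬ G.Adj t x).card :=
      fun t ht => by simpa using Finset.mem_filter.1 (hTsub ht)
    have hTdeg : ∀ t ∈ T, G.degree t < r := fun t ht =>
      hlowY t (hTY t ht).1 (hTY t ht).2
    -- W : vertices of X adjacent to some element of T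
    set W := X.filter (fun x => ∃ t ∈ T, G.Adj t x) with hW
    have hWcard : W.card ≤ s * (r - 1) := by
      have hsub : W ⊆ T.biUnion (fun t => X.filter (fun x => G.Adj t x)) := by
        intro x hx
        rw [hW, Finset.mem_filter] at hx
        obtain ⟨hxX, t, ht, hadj⟩ := hx
        exact Finset.mem_biUnion.2 ⟨t, ht, Finset.mem_filter.2 ⟨hxX, hadj⟩⟩
      calc W.card ≤ (T.biUnion (fun t => X.filter (fun x => G.Adj t x))).card :=
            Finset.card_le_card hsub
        _ ≤ ∑ t ∈ T, (X.filter (fun x => G.Adj t x)).card := Finset.card_biUnion_le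
        _ ≤ ∑ _t ∈ T, (r - 1) := by
            apply Finset.sum_le_sum
            intro t ht
            have := deg_add_nn G X Y hunion hY (hTY t ht).1
            have := filter_adj_eq G (nbrs_sub G X Y hunion hY (hTY t ht).1)
            rw [this]
            have := hTdeg t ht
            simp only [SimpleGraph.degree] at *
            omega
        _ = s * (r - 1) := by rw [Finset.sum_const, hTcard]; ring
    -- the non-neighbour count of v
    have hvnn := small_nonadj G hs X Y hdisj hunion hX hY hfree hv hdeg
    have hvdeg := deg_add_nn G X Y hunion hY hv
    -- candidate leaves
    have hKcard : r ≤ ((G.neighborFinset v) \ W).card := by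
      have h1 : (G.neighborFinset v).card - W.card ≤ ((G.neighborFinset v) \ W).card :=
        Finset.le_card_sdiff W _
      have h2 : (G.neighborFinset v).card = G.degree v := rfl
      omega
    obtain ⟨L, hLsub, hLcard⟩ := Finset.exists_subset_card_eq hKcard
    have hLnb : ∀ x ∈ L, G.Adj v x := fun x hx => by
      have h := (Finset.mem_sdiff.1 (hLsub hx)).1
      rw [mem_neighborFinset] at h; exact h
    have hLX : ∀ x ∈ L, x ∈ X := fun x hx =>
      nbrs_sub G X Y hunion hY hv (Finset.mem_sdiff.1 (hLsub hx)).1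
    have hLnW : ∀ x ∈ L, ∀ t ∈ T, ¬ G.Adj t x := by
      intro x hx t ht hadj
      have := (Finset.mem_sdiff.1 (hLsub hx)).2
      exact this (by rw [hW]; exact Finset.mem_filter.2 ⟨hLX x hx, t, ht, hadj⟩)
    refine no_star G hfree v L T hLcard hTcard hLnb
      (fun t ht => indep_pair hY v hv t (hTY t ht).1)
      (fun t ht he => by
        have := hTdeg t ht; rw [← he] at this; omega)
      (fun x hx y hy => indep_pair hX x (hLX x hx) y (hLX y hy))
      (fun x hx y hy => indep_pair hY x (hTY x hx).1 y (hTY y hy).1)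
      (fun x hx t ht hadj => hLnW x hx t ht hadj.symm)
  refine ⟨?_, hB⟩
  -- Step 3 : the X-side bound
  by_contra hcon
  push_neg at hcon
  obtain ⟨S, hSsub, hScard⟩ := Finset.exists_subset_card_eq hcon
  have hSX : ∀ a ∈ S, a ∈ X ∧ s - 1 < (Y.filter fun y => ¬ G.Adj a y).card :=
    fun a ha => by simpa using Finset.mem_filter.1 (hSsub ha)
  have hSdeg : ∀ a ∈ S, G.degree a < r := fun a ha =>
    hlowX a (hSX a ha).1 (hSX a ha).2
  -- C : vertices of Y non-adjacent to all of S
  set C := Y.filter (fun y => ∀ a ∈ S, ¬ G.Adj y a) with hC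
  have hCcard : s ≤ C.card := by
    have hpart := Finset.card_filter_add_card_filter_not (s := Y)
      (p := fun y => ∀ a ∈ S, ¬ G.Adj y a)
    rw [← hC] at hpart
    have hsub : (Y.filter fun y => ¬ ∀ a ∈ S, ¬ G.Adj y a) ⊆
        S.biUnion (fun a => Y.filter (fun y => G.Adj a y)) := by
      intro y hy
      rw [Finset.mem_filter] at hy
      obtain ⟨hyY, hy2⟩ := hy
      push_neg at hy2
      obtain ⟨a, ha, hadj⟩ := hy2
      exact Finset.mem_biUnion.2 ⟨a, ha, Finset.mem_filter.2 ⟨hyY, hadj.symm⟩⟩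
    have hbu : (S.biUnion (fun a => Y.filter (fun y => G.Adj a y))).card ≤ s * (r - 1) := by
      calc (S.biUnion (fun a => Y.filter (fun y => G.Adj a y))).card
          ≤ ∑ a ∈ S, (Y.filter (fun y => G.Adj a y)).card := Finset.card_biUnion_le
        _ ≤ ∑ _a ∈ S, (r - 1) := by
            apply Finset.sum_le_sum
            intro a ha
            have h1 := filter_adj_eq G (nbrs_sub G Y X
              (by rw [Finset.union_comm]; exact hunion) hX (hSX a ha).1)
            rw [h1]
            have := hSdeg a ha
            simp only [SimpleGraph.degree] at *
            omega
        _ = s * (r - 1) := by rw [Finset.sum_const, hScard]; ring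
    have := Finset.card_le_card hsub
    omega
  -- C ⊆ the bad set of Y
  have hCB : C ⊆ Y.filter fun y => s - 1 < (X.filter fun x => ¬ G.Adj y x).card := by
    intro y hy
    rw [hC, Finset.mem_filter] at hy
    obtain ⟨hyY, hyna⟩ := hy
    refine Finset.mem_filter.2 ⟨hyY, ?_⟩
    have hydeg : G.degree y < r := by
      by_contra hge
      push_neg at hge
      have hsmall := small_nonadj G hs X Y hdisj hunion hX hY hfree hyY hge
      have hSsub' : S ⊆ X.filter fun x => ¬ G.Adj y x := fun a ha =>
        Finset.mem_filter.2 ⟨(hSX a ha).1, hyna a ha⟩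
      have := Finset.card_le_card hSsub'
      omega
    have := deg_add_nn G X Y hunion hY hyY
    have hss : s ≤ s * r := Nat.le_mul_of_pos_right s hr
    omega
  have := Finset.card_le_card hCB
  omega


theorem stmt_0 {V : Type*} [Fintype V] [DecidableEq V] (G : SimpleGraph V)
    [DecidableRel G.Adj] (r s : ℕ) (hr : 1 ≤ r) (hs : 1 ≤ s)
    (X Y : Finset V) (hdisj : Disjoint X Y) (hunion : X ∪ Y = Finset.univ)
    (hX : IsIS G ↑X) (hY : IsIS G ↑Y)
    (hXcard : r * s + r - 1 ≤ X.card) (hYcard : r * s + r - 1 ≤ Y.card)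
    (hfree : HFree (starPlus r s) G) :
    (∀ v : V, G.degree v < r) ∨
      (((X.filter fun x => s - 1 < (Y.filter fun y => ¬ G.Adj x y).card).card < s) ∧
       ((Y.filter fun y => s - 1 < (X.filter fun x => ¬ G.Adj y x).card).card < s)) := by
  by_cases hall : ∀ v : V, G.degree v < r
  · exact Or.inl hall
  push_neg at hall
  obtain ⟨v, hv⟩ := hall
  right
  have hvm : v ∈ X ∪ Y := hunion ▸ Finset.mem_univ v
  rcases Finset.mem_union.1 hvm with hvX | hvY
  · have h := key G r s hr hs Y X hdisj.symm (by rw [Finset.union_comm]; exact hunion)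
      hY hX hYcard hXcard hfree v hvX hv
    exact ⟨h.2, h.1⟩
  · exact key G r s hr hs X Y hdisj hunion hX hY hXcard hYcard hfree v hvY hv
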